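/- For every positive integer n, the n-th Bernoulli number satisfies Bₙ = ∑_{i=0}^{n} (-1)^i · [C(n+1, i+1)/C(n+i, i)] · S(n+i, i), where S denotes the Stirling numbers of the second kind. -/

import Mathlib

open Finset

/-- Bell polynomials of the second kind: `bellB n k x` is
`B_{n,k}(x 1, x 2, …, x (n-k+1))`, summing over sequences of nonnegative
integers `ℓ 1, …` with `∑ i * ℓ i = n` and `∑ ℓ i = k`. -/
noncomputable def bellB (n k : ℕ) (x : ℕ → ℝ) : ℝ :=
  ∑ ℓ : Fin (n + 1) → Fin (n + 1),
    if (ℓ 0 : ℕ) = 0 ∧ (∑ i : Fin (n + 1), (i : ℕ) * (ℓ i : ℕ)) = n ∧ (∑ i : Fin (n + 1), (ℓ i : ℕ)) = k then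
      (n.factorial : ℝ) / (∏ i : Fin (n + 1), ((ℓ i : ℕ).factorial : ℝ)) *
        ∏ i : Fin (n + 1), (x (i : ℕ) / ((i : ℕ).factorial : ℝ)) ^ (ℓ i : ℕ)
    else 0

/-- Stirling numbers of the second kind (real-valued), with
`stirlingS 0 0 = 1` and `stirlingS n 0 = 0` for `n ≥ 1`. -/
noncomputable def stirlingS (n k : ℕ) : ℝ :=
  (1 / (k.factorial : ℝ)) *
    ∑ l ∈ Finset.range (k + 1), (-1 : ℝ) ^ (k - l) * (k.choose l) * (l : ℝ) ^ n

open PowerSeries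

noncomputable def Eser : PowerSeries ℝ := PowerSeries.mk fun m => 1 / ((m + 1).factorial : ℝ)

lemma X_mul_Eser : (X : PowerSeries ℝ) * Eser = exp ℝ - 1 := by
  ext k
  cases k with
  | zero => simp [Eser, coeff_exp]
  | succ k =>
      simp [Eser, coeff_succ_X_mul, coeff_exp, coeff_one,
        eq_ratCast, Rat.cast_div, Nat.succ_ne_zero]

lemma bps_mul_Eser : bernoulliPowerSeries ℝ * Eser = 1 := by
  have h := bernoulliPowerSeries_mul_exp_sub_one ℝ
  rw [← X_mul_Eser] at h
  have : (X : PowerSeries ℝ) * (bernoulliPowerSeries ℝ * Eser) = X * 1 := by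
    rw [mul_one]; conv_rhs => rw [← h]
    ring
  exact mul_left_cancel₀ X_ne_zero this

lemma coeff_exp_sub_one_pow (m k : ℕ) :
    (coeff m) ((exp ℝ - 1) ^ k) =
      (k.factorial : ℝ) / (m.factorial : ℝ) * stirlingS m k := by
  have h : (exp ℝ - 1) ^ k = ∑ l ∈ range (k + 1),
      exp ℝ ^ l * (-1 : PowerSeries ℝ) ^ (k - l) * (k.choose l) := by
    rw [sub_eq_add_neg, add_pow]
  rw [h, map_sum, stirlingS, Finset.mul_sum, Finset.mul_sum]
  refine Finset.sum_congr rfl fun l hl => ?_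
  have h2 : (exp ℝ ^ l * (-1 : PowerSeries ℝ) ^ (k - l) * (k.choose l : PowerSeries ℝ))
      = ((-1 : ℝ) ^ (k - l) * (k.choose l : ℝ)) • (rescale (l : ℝ) (exp ℝ)) := by
    rw [exp_pow_eq_rescale_exp, smul_eq_C_mul, map_mul, map_pow, map_neg, map_one,
      map_natCast]
    ring
  rw [h2, map_smul, smul_eq_mul, coeff_rescale, coeff_exp]
  have hm : ((m.factorial : ℝ)) ≠ 0 := Nat.cast_ne_zero.mpr m.factorial_ne_zero
  have hk : ((k.factorial : ℝ)) ≠ 0 := Nat.cast_ne_zero.mpr k.factorial_ne_zero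
  have : (algebraMap ℚ ℝ) (1 / (m.factorial : ℚ)) = 1 / (m.factorial : ℝ) := by
    push_cast [eq_ratCast]
    norm_num
  rw [this]
  field_simp

noncomputable def Gser (n : ℕ) : PowerSeries ℝ :=
  ∑ i ∈ range (n + 1), (((n + 1).choose (i + 1) : ℝ)) • (-Eser) ^ i

lemma Eser_mul_Gser (n : ℕ) : Eser * Gser n = 1 - (1 - Eser) ^ (n + 1) := by
  have hb : (1 - Eser) ^ (n + 1) = ∑ j ∈ range (n + 2),
      (-Eser) ^ j * 1 ^ (n + 1 - j) * ((n + 1).choose j : PowerSeries ℝ) := by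
    have h1 : (1 : PowerSeries ℝ) - Eser = -Eser + 1 := by ring
    rw [h1, add_pow]
  have key : ∀ i, Eser * ((((n + 1).choose (i + 1) : ℝ)) • (-Eser) ^ i)
      = -((-Eser) ^ (i + 1) * 1 ^ (n + 1 - (i + 1)) * ((n + 1).choose (i + 1) : PowerSeries ℝ)) := by
    intro i
    rw [smul_eq_C_mul, ← map_natCast (C) ((n + 1).choose (i + 1)), pow_succ]
    ring
  calc Eser * Gser n
      = ∑ i ∈ range (n + 1), Eser * ((((n + 1).choose (i + 1) : ℝ)) • (-Eser) ^ i) := by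
        rw [Gser, Finset.mul_sum]
    _ = -∑ i ∈ range (n + 1),
          (-Eser) ^ (i + 1) * 1 ^ (n + 1 - (i + 1)) * ((n + 1).choose (i + 1) : PowerSeries ℝ) := by
        rw [← Finset.sum_neg_distrib]
        exact Finset.sum_congr rfl fun i _ => key i
    _ = 1 - (1 - Eser) ^ (n + 1) := by
        rw [hb]
        conv_rhs => rw [Finset.sum_range_succ']
        simp only [pow_zero, one_pow, Nat.choose_zero_right, Nat.cast_one, one_mul, mul_one]
        ring

lemma coeff_Gser (n : ℕ) : coeff n (Gser n) = coeff n (bernoulliPowerSeries ℝ) := by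
  have hEB : Eser * bernoulliPowerSeries ℝ = 1 := by rw [mul_comm]; exact bps_mul_Eser
  have hXdvd : (X : PowerSeries ℝ) ∣ (1 - Eser) := by
    rw [X_dvd_iff, map_sub]
    simp [Eser, ← coeff_zero_eq_constantCoeff_apply]
  have hd : (X : PowerSeries ℝ) ^ (n + 1) ∣ Eser * (Gser n - bernoulliPowerSeries ℝ) := by
    have : Eser * (Gser n - bernoulliPowerSeries ℝ) = -((1 - Eser) ^ (n + 1)) := by
      rw [mul_sub, Eser_mul_Gser, hEB]; ring
    rw [this]
    exact dvd_neg.mpr (pow_dvd_pow_of_dvd hXdvd (n + 1))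
  have hu : IsUnit Eser := by
    rw [isUnit_iff_constantCoeff]
    have : constantCoeff Eser = 1 := by
      simp [Eser, ← coeff_zero_eq_constantCoeff_apply]
    rw [this]; exact isUnit_one
  obtain ⟨u, hue⟩ := hu
  have hd2 : (X : PowerSeries ℝ) ^ (n + 1) ∣ (Gser n - bernoulliPowerSeries ℝ) := by
    obtain ⟨c, hc⟩ := hd
    exact ⟨(↑u⁻¹ : PowerSeries ℝ) * c, by
      calc Gser n - bernoulliPowerSeries ℝ
          = (↑u⁻¹ : PowerSeries ℝ) * (Eser * (Gser n - bernoulliPowerSeries ℝ)) := by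
            rw [← mul_assoc, ← hue, ← Units.val_mul, inv_mul_cancel]; simp
        _ = X ^ (n + 1) * ((↑u⁻¹ : PowerSeries ℝ) * c) := by rw [hc]; ring⟩
  have h0 : coeff n (Gser n - bernoulliPowerSeries ℝ) = 0 :=
    X_pow_dvd_iff.mp hd2 n (Nat.lt_succ_self n)
  rw [map_sub] at h0
  linarith

theorem stmt_2 (n : ℕ) (hn : 1 ≤ n) :
    (bernoulli n : ℝ) =
      ∑ i ∈ Finset.range (n + 1),
        (-1 : ℝ) ^ i * (((n + 1).choose (i + 1) : ℝ) / ((n + i).choose i : ℝ)) *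
          stirlingS (n + i) i := by
  have hbps : coeff n (bernoulliPowerSeries ℝ) = (bernoulli n : ℝ) / (n.factorial : ℝ) := by
    rw [bernoulliPowerSeries, coeff_mk, eq_ratCast]
    push_cast
    ring
  have hn0 : ((n.factorial : ℝ)) ≠ 0 := Nat.cast_ne_zero.mpr n.factorial_ne_zero
  have main : ∑ i ∈ Finset.range (n + 1),
        (-1 : ℝ) ^ i * (((n + 1).choose (i + 1) : ℝ) / ((n + i).choose i : ℝ)) *
          stirlingS (n + i) i = (n.factorial : ℝ) * coeff n (Gser n) := by
    rw [Gser, map_sum, Finset.mul_sum]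
    refine Finset.sum_congr rfl fun i _ => ?_
    have hst : stirlingS (n + i) i
        = ((n + i).factorial : ℝ) / (i.factorial : ℝ) * coeff n (Eser ^ i) := by
      have h1 := coeff_exp_sub_one_pow (n + i) i
      have h2 : (exp ℝ - 1) ^ i = X ^ i * Eser ^ i := by rw [← X_mul_Eser, mul_pow]
      rw [h2, coeff_X_pow_mul] at h1
      have hi0 : ((i.factorial : ℝ)) ≠ 0 := Nat.cast_ne_zero.mpr i.factorial_ne_zero
      have hni0 : (((n + i).factorial : ℝ)) ≠ 0 := Nat.cast_ne_zero.mpr (n + i).factorial_ne_zero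
      rw [h1]
      field_simp
    have hneg : coeff n ((-Eser) ^ i) = (-1 : ℝ) ^ i * coeff n (Eser ^ i) := by
      rw [neg_pow, show ((-1 : PowerSeries ℝ)) = C (-1) by simp, ← map_pow, coeff_C_mul]
    rw [map_smul, smul_eq_mul, hst, hneg]
    have hfact : (((n + i).choose i : ℝ)) * (i.factorial : ℝ) * (n.factorial : ℝ)
        = ((n + i).factorial : ℝ) := by
      have := Nat.choose_mul_factorial_mul_factorial (Nat.le_add_left i n)
      rw [Nat.add_sub_cancel] at this
      exact_mod_cast this
    have hi0 : ((i.factorial : ℝ)) ≠ 0 := Nat.cast_ne_zero.mpr i.factorial_ne_zero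
    have hch0 : (((n + i).choose i : ℝ)) ≠ 0 :=
      Nat.cast_ne_zero.mpr (Nat.choose_pos (Nat.le_add_left i n)).ne'
    field_simp
    linear_combination (-((n + 1).choose (i + 1) : ℝ) * coeff n (Eser ^ i)) * hfact
  rw [main, coeff_Gser, hbps]
  field_simp
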